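/- Let X and Z be finite types with X nonempty, ℓ : X → Z → ℝ strictly positive, α > 0, and N = card X. Let P_X be the uniform distribution on X. Then min over probability mass functions p on Z of ( -(1/N) * ∑ x, log (∑ z, p z * (ℓ x z)^α) ) equals min over channels Q : X → (pmf on Z) of ( I(X;Z) - α * (1/N) * ∑ x, ∑ z, Q x z * log (ℓ x z) ), where I(X;Z) = (1/N) * ∑ x, ∑ z, Q x z * log (Q x z / ((1/N) * ∑ x', Q x' z)) is the mutual information induced by the joint distribution (1/N) * Q x z. -/

import Mathlib

open Finset Real

private lemma gibbs' {Z : Type*} [Fintype Z] (Q r : Z → ℝ)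
    (hQ : ∀ i, 0 ≤ Q i) (hQ1 : ∑ i, Q i = 1) (hr : ∀ i, 0 ≤ r i)
    (hpos : ∀ i, 0 < Q i → 0 < r i) :
    - Real.log (∑ i, r i) ≤ ∑ i, Q i * Real.log (Q i / r i) := by
  obtain ⟨i0, hi0⟩ : ∃ i, 0 < Q i := by
    by_contra h
    push_neg at h
    have h0 : ∑ i, Q i = 0 := Finset.sum_eq_zero fun i _ => le_antisymm (h i) (hQ i)
    rw [hQ1] at h0; norm_num at h0
  set S := ∑ i, r i with hSdef
  have hS : 0 < S :=
    lt_of_lt_of_le (hpos i0 hi0) (Finset.single_le_sum (fun i _ => hr i) (Finset.mem_univ i0))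
  have key : ∀ i, Q i - r i / S ≤ Q i * (Real.log (Q i / r i) + Real.log S) := by
    intro i
    rcases (hQ i).eq_or_lt with h0 | h0
    · rw [← h0]
      simp only [zero_mul, zero_sub]
      exact neg_nonpos.mpr (div_nonneg (hr i) hS.le)
    · have hri := hpos i h0
      have hlog : Real.log (r i / (Q i * S)) ≤ r i / (Q i * S) - 1 :=
        Real.log_le_sub_one_of_pos (by positivity)
      have hid : Real.log (Q i / r i) + Real.log S = - Real.log (r i / (Q i * S)) := by
        rw [Real.log_div h0.ne' hri.ne', Real.log_div hri.ne' (by positivity),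
          Real.log_mul h0.ne' hS.ne']
        ring
      rw [hid, mul_neg]
      have h2 := mul_le_mul_of_nonneg_left hlog (hQ i)
      have h3 : Q i * (r i / (Q i * S) - 1) = r i / S - Q i := by
        field_simp
      linarith
  have h1 : ∑ i, (Q i - r i / S) = 0 := by
    rw [Finset.sum_sub_distrib, hQ1, ← Finset.sum_div, ← hSdef, div_self hS.ne']
    ring
  have h2 : ∑ i, Q i * (Real.log (Q i / r i) + Real.log S)
      = (∑ i, Q i * Real.log (Q i / r i)) + Real.log S := by
    simp only [mul_add]
    rw [Finset.sum_add_distrib, ← Finset.sum_mul, hQ1, one_mul]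
  have h3 := Finset.sum_le_sum (fun i (_ : i ∈ Finset.univ) => key i)
  rw [h1, h2] at h3
  linarith

theorem stmt8 {X Z : Type*} [Fintype X] [Nonempty X] [Fintype Z]
    (ℓ : X → Z → ℝ) (hℓ : ∀ x z, 0 < ℓ x z) (α : ℝ) (hα : 0 < α) :
    sInf {y : ℝ | ∃ p : Z → ℝ, (∀ z, 0 ≤ p z) ∧ (∑ z, p z = 1) ∧
        y = -(1 / (Fintype.card X : ℝ)) * ∑ x, Real.log (∑ z, p z * (ℓ x z) ^ α)} =
    sInf {y : ℝ | ∃ Q : X → Z → ℝ, (∀ x z, 0 ≤ Q x z) ∧ (∀ x, ∑ z, Q x z = 1) ∧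
        y = (1 / (Fintype.card X : ℝ)) * ∑ x, ∑ z,
              Q x z * Real.log (Q x z / ((1 / (Fintype.card X : ℝ)) * ∑ x', Q x' z))
          - α * ((1 / (Fintype.card X : ℝ)) * ∑ x, ∑ z,
              Q x z * Real.log (ℓ x z))} := by
  classical
  rcases isEmpty_or_nonempty Z with hZ | hZ
  · congr 1
    ext y
    simp only [Set.mem_setOf_eq]
    constructor
    · rintro ⟨p, -, h, -⟩
      simp at h
    · rintro ⟨Q, -, h, -⟩
      have := h (Classical.arbitrary X)
      simp at this
  have hN : (0:ℝ) < (Fintype.card X : ℝ) := by exact_mod_cast Fintype.card_pos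
  set c : ℝ := 1 / (Fintype.card X : ℝ) with hc_def
  have hc : 0 < c := by rw [hc_def]; positivity
  -- positivity of partition sums
  have hSpos : ∀ p : Z → ℝ, (∀ z, 0 ≤ p z) → ∑ z, p z = 1 →
      ∀ x, 0 < ∑ z, p z * ℓ x z ^ α := by
    intro p hp0 hp1 x
    obtain ⟨z0, hz0⟩ : ∃ z, 0 < p z := by
      by_contra h
      push_neg at h
      have h0 : ∑ z, p z = 0 := Finset.sum_eq_zero fun z _ => le_antisymm (h z) (hp0 z)
      rw [hp1] at h0; norm_num at h0
    refine lt_of_lt_of_le (mul_pos hz0 (Real.rpow_pos_of_pos (hℓ x z0) α)) ?_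
    exact Finset.single_le_sum
      (fun z _ => mul_nonneg (hp0 z) (Real.rpow_nonneg (hℓ x z).le α)) (Finset.mem_univ z0)
  -- uniform lower bound for the prior objective
  have hbound : ∀ p : Z → ℝ, (∀ z, 0 ≤ p z) → ∑ z, p z = 1 →
      -c * ∑ x, Real.log (∑ z, ℓ x z ^ α) ≤ -c * ∑ x, Real.log (∑ z, p z * ℓ x z ^ α) := by
    intro p hp0 hp1
    have hmono : ∀ x, Real.log (∑ z, p z * ℓ x z ^ α) ≤ Real.log (∑ z, ℓ x z ^ α) := by
      intro x
      apply Real.log_le_log (hSpos p hp0 hp1 x)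
      apply Finset.sum_le_sum
      intro z _
      have hpz1 : p z ≤ 1 := hp1 ▸ Finset.single_le_sum (fun z _ => hp0 z) (Finset.mem_univ z)
      calc p z * ℓ x z ^ α ≤ 1 * ℓ x z ^ α :=
            mul_le_mul_of_nonneg_right hpz1 (Real.rpow_nonneg (hℓ x z).le α)
        _ = ℓ x z ^ α := one_mul _
    have h := mul_le_mul_of_nonneg_left
      (Finset.sum_le_sum fun x (_ : x ∈ Finset.univ) => hmono x) hc.le
    simp only [neg_mul]
    exact neg_le_neg h
  -- marginal is a pmf
  have hmarg0 : ∀ Q : X → Z → ℝ, (∀ x z, 0 ≤ Q x z) → ∀ z, 0 ≤ c * ∑ x', Q x' z :=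
    fun Q hQ0 z => mul_nonneg hc.le (Finset.sum_nonneg fun x _ => hQ0 x z)
  have hmarg1 : ∀ Q : X → Z → ℝ, (∀ x, ∑ z, Q x z = 1) → ∑ z, c * ∑ x', Q x' z = 1 := by
    intro Q h
    rw [← Finset.mul_sum, Finset.sum_comm, Finset.sum_congr rfl fun x (_ : x ∈ Finset.univ) => h x,
      Finset.sum_const, Finset.card_univ, nsmul_eq_mul, mul_one, hc_def]
    exact one_div_mul_cancel hN.ne'
  -- Direction 1: for any channel Q, the prior objective at the marginal is ≤ the Lagrangian
  have dir1 : ∀ Q : X → Z → ℝ, (∀ x z, 0 ≤ Q x z) → (∀ x, ∑ z, Q x z = 1) →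
      -c * ∑ x, Real.log (∑ z, (c * ∑ x', Q x' z) * ℓ x z ^ α) ≤
      c * ∑ x, ∑ z, Q x z * Real.log (Q x z / (c * ∑ x', Q x' z))
        - α * (c * ∑ x, ∑ z, Q x z * Real.log (ℓ x z)) := by
    intro Q hQ0 hQ1
    set p : Z → ℝ := fun z => c * ∑ x', Q x' z with hp_def
    have hp0 : ∀ z, 0 ≤ p z := hmarg0 Q hQ0
    have step : ∀ x, - Real.log (∑ z, p z * ℓ x z ^ α) ≤
        ∑ z, (Q x z * Real.log (Q x z / p z) - α * (Q x z * Real.log (ℓ x z))) := by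
      intro x
      have hg := gibbs' (Q x) (fun z => p z * ℓ x z ^ α) (hQ0 x) (hQ1 x)
        (fun z => mul_nonneg (hp0 z) (Real.rpow_nonneg (hℓ x z).le α))
        (fun z hz => mul_pos
          (lt_of_lt_of_le (mul_pos hc hz) (mul_le_mul_of_nonneg_left
            (Finset.single_le_sum (fun x' _ => hQ0 x' z) (Finset.mem_univ x)) hc.le))
          (Real.rpow_pos_of_pos (hℓ x z) α))
      refine hg.trans_eq (Finset.sum_congr rfl fun z _ => ?_)
      rcases (hQ0 x z).eq_or_lt with h0 | h0
      · rw [← h0]; ring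
      · have hpz : 0 < p z := lt_of_lt_of_le (mul_pos hc h0)
          (mul_le_mul_of_nonneg_left
            (Finset.single_le_sum (fun x' _ => hQ0 x' z) (Finset.mem_univ x)) hc.le)
        rw [← div_div,
          Real.log_div (div_pos h0 hpz).ne' (Real.rpow_pos_of_pos (hℓ x z) α).ne',
          Real.log_rpow (hℓ x z)]
        ring
    calc -c * ∑ x, Real.log (∑ z, p z * ℓ x z ^ α)
        = c * ∑ x, -Real.log (∑ z, p z * ℓ x z ^ α) := by
          rw [Finset.sum_neg_distrib]; ring
      _ ≤ c * ∑ x, ∑ z, (Q x z * Real.log (Q x z / p z) - α * (Q x z * Real.log (ℓ x z))) :=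
          mul_le_mul_of_nonneg_left
            (Finset.sum_le_sum fun x (_ : x ∈ Finset.univ) => step x) hc.le
      _ = c * ∑ x, ∑ z, Q x z * Real.log (Q x z / p z)
            - α * (c * ∑ x, ∑ z, Q x z * Real.log (ℓ x z)) := by
          simp only [Finset.sum_sub_distrib, ← Finset.mul_sum]
          ring
  -- Direction 2: for any prior p, there is a channel with Lagrangian ≤ the prior objective
  have dir2 : ∀ p : Z → ℝ, (∀ z, 0 ≤ p z) → ∑ z, p z = 1 →
      ∃ Q : X → Z → ℝ, (∀ x z, 0 ≤ Q x z) ∧ (∀ x, ∑ z, Q x z = 1) ∧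
        c * ∑ x, ∑ z, Q x z * Real.log (Q x z / (c * ∑ x', Q x' z))
          - α * (c * ∑ x, ∑ z, Q x z * Real.log (ℓ x z))
        ≤ -c * ∑ x, Real.log (∑ z, p z * ℓ x z ^ α) := by
    intro p hp0 hp1
    set S : X → ℝ := fun x => ∑ z, p z * ℓ x z ^ α with hS_def
    have hS : ∀ x, 0 < S x := hSpos p hp0 hp1
    set Q : X → Z → ℝ := fun x z => p z * ℓ x z ^ α / S x with hQ_def
    have hQnn : ∀ x z, 0 ≤ Q x z := fun x z =>
      div_nonneg (mul_nonneg (hp0 z) (Real.rpow_nonneg (hℓ x z).le α)) (hS x).le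
    have hQsum : ∀ x, ∑ z, Q x z = 1 := by
      intro x
      have : ∑ z, Q x z = (∑ z, p z * ℓ x z ^ α) / S x := by
        rw [← Finset.sum_div]
      rw [this]
      exact div_self (hS x).ne'
    refine ⟨Q, hQnn, hQsum, ?_⟩
    have key : ∀ x z, Q x z * Real.log (Q x z / (c * ∑ x', Q x' z))
          - α * (Q x z * Real.log (ℓ x z))
        = -(Q x z * Real.log (S x)) + Q x z * Real.log (p z / (c * ∑ x', Q x' z)) := by
      intro x z
      rcases (hQnn x z).eq_or_lt with h | h
      · rw [← h]; ring
      · have hq : 0 < c * ∑ x', Q x' z :=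
          mul_pos hc (lt_of_lt_of_le h
            (Finset.single_le_sum (fun x' _ => hQnn x' z) (Finset.mem_univ x)))
        have hpz : 0 < p z := by
          rcases (hp0 z).eq_or_lt with h' | h'
          · exfalso
            have hz : Q x z = 0 := by simp [hQ_def, ← h']
            rw [hz] at h; exact lt_irrefl _ h
          · exact h'
        have hQval : Real.log (Q x z)
            = Real.log (p z) + α * Real.log (ℓ x z) - Real.log (S x) := by
          have hrfl : Q x z = p z * ℓ x z ^ α / S x := rfl
          rw [hrfl,
            Real.log_div (mul_pos hpz (Real.rpow_pos_of_pos (hℓ x z) α)).ne' (hS x).ne',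
            Real.log_mul hpz.ne' (Real.rpow_pos_of_pos (hℓ x z) α).ne',
            Real.log_rpow (hℓ x z)]
        rw [Real.log_div h.ne' hq.ne', Real.log_div hpz.ne' hq.ne', hQval]
        ring
    have hT : ∑ x, ∑ z, Q x z * Real.log (p z / (c * ∑ x', Q x' z)) ≤ 0 := by
      rw [Finset.sum_comm]
      have bound : ∀ z, ∑ x, Q x z * Real.log (p z / (c * ∑ x', Q x' z))
          ≤ p z / c - ∑ x, Q x z := by
        intro z
        rw [← Finset.sum_mul]
        set t := ∑ x, Q x z with ht_def
        rcases (Finset.sum_nonneg fun x _ => hQnn x z : (0:ℝ) ≤ t).eq_or_lt with h0 | h0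
        · rw [← ht_def] at h0
          rw [← h0]
          simp only [zero_mul, sub_zero]
          exact div_nonneg (hp0 z) hc.le
        · rw [← ht_def] at h0
          have hpz : 0 < p z := by
            rcases (hp0 z).eq_or_lt with h' | h'
            · exfalso
              have hz : t = 0 := by
                rw [ht_def]
                refine Finset.sum_eq_zero fun x _ => ?_
                simp [hQ_def, ← h']
              rw [hz] at h0; exact lt_irrefl _ h0
            · exact h'
          have hct : 0 < c * t := mul_pos hc h0
          have hlog := Real.log_le_sub_one_of_pos (show 0 < p z / (c * t) by positivity)
          have h2 := mul_le_mul_of_nonneg_left hlog h0.le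
          have h3 : t * (p z / (c * t) - 1) = p z / c - t := by
            field_simp
          linarith
      calc ∑ z, ∑ x, Q x z * Real.log (p z / (c * ∑ x', Q x' z))
          ≤ ∑ z, (p z / c - ∑ x, Q x z) := Finset.sum_le_sum fun z _ => bound z
        _ = 0 := by
          rw [Finset.sum_sub_distrib, ← Finset.sum_div, hp1, Finset.sum_comm,
            Finset.sum_congr rfl fun x (_ : x ∈ Finset.univ) => hQsum x,
            Finset.sum_const, Finset.card_univ, nsmul_eq_mul, mul_one, hc_def]
          field_simp
          ring
    have expand : c * ∑ x, ∑ z, Q x z * Real.log (Q x z / (c * ∑ x', Q x' z))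
          - α * (c * ∑ x, ∑ z, Q x z * Real.log (ℓ x z))
        = c * ∑ x, ∑ z, (Q x z * Real.log (Q x z / (c * ∑ x', Q x' z))
            - α * (Q x z * Real.log (ℓ x z))) := by
      simp only [Finset.sum_sub_distrib, ← Finset.mul_sum]
      ring
    rw [expand]
    have split : ∀ x, ∑ z, (Q x z * Real.log (Q x z / (c * ∑ x', Q x' z))
          - α * (Q x z * Real.log (ℓ x z)))
        = -Real.log (S x) + ∑ z, Q x z * Real.log (p z / (c * ∑ x', Q x' z)) := by
      intro x
      rw [Finset.sum_congr rfl fun z (_ : z ∈ Finset.univ) => key x z,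
        Finset.sum_add_distrib]
      congr 1
      rw [Finset.sum_neg_distrib, ← Finset.sum_mul, hQsum x, one_mul]
    rw [Finset.sum_congr rfl fun x (_ : x ∈ Finset.univ) => split x,
      Finset.sum_add_distrib, Finset.sum_neg_distrib]
    have hSx : ∑ x, Real.log (S x) = ∑ x, Real.log (∑ z, p z * ℓ x z ^ α) := rfl
    rw [← hSx]
    nlinarith [hT, hc.le,
      mul_nonneg hc.le (neg_nonneg.mpr hT)]
  -- nonemptiness witnesses
  have hMZ : (0:ℝ) < (Fintype.card Z : ℝ) := by exact_mod_cast Fintype.card_pos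
  have hup0 : ∀ z : Z, 0 ≤ (1 : ℝ) / (Fintype.card Z : ℝ) := fun _ => by positivity
  have hup1 : ∑ _z : Z, (1 : ℝ) / (Fintype.card Z : ℝ) = 1 := by
    rw [Finset.sum_const, Finset.card_univ, nsmul_eq_mul]
    field_simp
  have bddA : BddBelow {y : ℝ | ∃ p : Z → ℝ, (∀ z, 0 ≤ p z) ∧ (∑ z, p z = 1) ∧
      y = -c * ∑ x, Real.log (∑ z, p z * (ℓ x z) ^ α)} := by
    refine ⟨-c * ∑ x, Real.log (∑ z, ℓ x z ^ α), ?_⟩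
    rintro y ⟨p, hp0, hp1, rfl⟩
    exact hbound p hp0 hp1
  have bddB : BddBelow {y : ℝ | ∃ Q : X → Z → ℝ, (∀ x z, 0 ≤ Q x z) ∧ (∀ x, ∑ z, Q x z = 1) ∧
      y = c * ∑ x, ∑ z, Q x z * Real.log (Q x z / (c * ∑ x', Q x' z))
        - α * (c * ∑ x, ∑ z, Q x z * Real.log (ℓ x z))} := by
    refine ⟨-c * ∑ x, Real.log (∑ z, ℓ x z ^ α), ?_⟩
    rintro y ⟨Q, hQ0, hQ1, rfl⟩
    exact le_trans (hbound _ (hmarg0 Q hQ0) (hmarg1 Q hQ1)) (dir1 Q hQ0 hQ1)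
  apply le_antisymm
  · refine le_csInf ?_ ?_
    · exact ⟨_, ⟨fun x z => 1 / (Fintype.card Z : ℝ), fun x z => hup0 z,
        fun x => hup1, rfl⟩⟩
    · rintro b ⟨Q, hQ0, hQ1, rfl⟩
      refine csInf_le_of_le bddA ⟨fun z => c * ∑ x', Q x' z, hmarg0 Q hQ0, hmarg1 Q hQ1, rfl⟩
        (dir1 Q hQ0 hQ1)
  · refine le_csInf ?_ ?_
    · exact ⟨_, ⟨fun z => 1 / (Fintype.card Z : ℝ), hup0, hup1, rfl⟩⟩
    · rintro a ⟨p, hp0, hp1, rfl⟩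
      obtain ⟨Q, hQ0, hQ1, hle⟩ := dir2 p hp0 hp1
      exact csInf_le_of_le bddB ⟨Q, hQ0, hQ1, rfl⟩ hle
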